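/- Let k ≥ 2 be an integer and 0 < a < π/2 a real number. Then for all z ∈ ℂ \ {0}, z^k · e^{az} ≠ conj(−e^{az}/z^k). That is, the equation φ(z) = conj(ψ(z)) with φ(z) = z^k e^{az} and ψ(z) = −e^{az}/z^k has no solutions in ℂ \ {0}. -/

import Mathlib

open Complex

/-- For an integer `k ≥ 2` and a real `0 < a < π/2`, the Gauss maps
`φ(z) = z^k e^{az}` and `ψ(z) = -e^{az}/z^k` of the stationary surface `M_{k,a}`
satisfy `φ(z) ≠ conj (ψ(z))` for every `z ∈ ℂ \ {0}`. -/
theorem stmt2 (k : ℕ) (hk : 2 ≤ k) (a : ℝ) (ha : 0 < a) (ha' : a < Real.pi / 2) :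
    ∀ z : ℂ, z ≠ 0 →
      z ^ k * Complex.exp ((a : ℂ) * z) ≠
        (starRingEnd ℂ) (-(Complex.exp ((a : ℂ) * z)) / z ^ k) := by
  intro z hz h
  have hzk : z ^ k ≠ 0 := pow_ne_zero _ hz
  have h2 : z ^ k * (starRingEnd ℂ) z ^ k * Complex.exp ((a:ℂ)*z)
      = - Complex.exp ((a:ℂ) * (starRingEnd ℂ) z) := by
    have hh : (starRingEnd ℂ) (-(Complex.exp ((a:ℂ)*z)) / z ^ k) * (starRingEnd ℂ) z ^ k
        = - Complex.exp ((a:ℂ) * (starRingEnd ℂ) z) := by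
      rw [← map_pow, ← map_mul, div_mul_cancel₀ _ hzk, map_neg, ← Complex.exp_conj,
        map_mul, Complex.conj_ofReal]
    rw [← hh, ← h]; ring
  have h3 := h2
  rw [← mul_pow, Complex.mul_conj] at h3
  -- take absolute values
  have h4 := congrArg (‖·‖) h3
  simp [map_mul, map_pow, Complex.norm_exp, Complex.norm_real] at h4
  have h5 : Complex.normSq z ^ k = 1 := by
    rwa [_root_.abs_of_nonneg (Complex.normSq_nonneg z)] at h4
  have hns : Complex.normSq z = 1 := by
    rcases lt_trichotomy (Complex.normSq z) 1 with h1 | h1 | h1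
    · have := pow_lt_one₀ (Complex.normSq_nonneg z) h1 (by omega : k ≠ 0)
      linarith
    · exact h1
    · have := one_lt_pow₀ h1 (by omega : k ≠ 0)
      linarith
  rw [hns] at h3
  simp at h3
  -- exp (a z) = - exp (a conj z)
  have h6 : Complex.exp ((a:ℂ)*z - (a:ℂ)*(starRingEnd ℂ) z) = -1 := by
    rw [Complex.exp_sub, h3]
    field_simp
  have h7 : (a:ℂ)*z - (a:ℂ)*(starRingEnd ℂ) z = ((2 * a * z.im : ℝ) : ℂ) * Complex.I := by
    rw [← mul_sub, Complex.sub_conj]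
    push_cast
    ring
  rw [h7] at h6
  have h8 : Real.cos (2 * a * z.im) = -1 := by
    have := congrArg Complex.re h6
    rwa [Complex.exp_ofReal_mul_I_re] at this
  -- but |2 a z.im| < π
  have him : |z.im| ≤ 1 := by
    have h1 := Complex.abs_im_le_norm z
    have h2' : ‖z‖ = 1 := by
      rw [Complex.norm_def, hns, Real.sqrt_one]
    linarith [h2' ▸ h1]
  have hlt : |2 * a * z.im| < Real.pi := by
    have : |2 * a * z.im| = 2 * a * |z.im| := by
      rw [abs_mul, _root_.abs_of_nonneg (by linarith : (0:ℝ) ≤ 2 * a)]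
    rw [this]
    nlinarith [Real.pi_pos]
  have : Real.cos Real.pi < Real.cos |2 * a * z.im| :=
    Real.cos_lt_cos_of_nonneg_of_le_pi (abs_nonneg _) le_rfl hlt
  rw [Real.cos_pi, Real.cos_abs, h8] at this
  linarith
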